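/- Lemma (flags of a power complex). Let 𝒦 be a family of subsets of V with ∅ ∈ 𝒦. Then the map (ε, 𝒞) ↦ {C(ε) : C ∈ 𝒞} is a bijection from the set of pairs consisting of a function ε : V → N and a maximal chain 𝒞 of (𝒦, ⊆) onto the set of maximal chains of (ℱ, ⊆). In particular, every maximal chain of (ℱ, ⊆) contains exactly one singleton set {ε}, and all of its members contain ε. -/

import Mathlib

/-- The face `F(ε)` of the power complex. -/
def face (n v : ℕ) (F : Set (Fin v)) (ε : Fin v → Fin n) : Set (Fin v → Fin n) :=
  {η | ∀ i ∉ F, η i = ε i}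

/-- The power complex `n^𝒦`, as a family of subsets of `V → N`. -/
def powerComplex (n v : ℕ) (𝒦 : Set (Set (Fin v))) : Set (Set (Fin v → Fin n)) :=
  {A | ∃ F ∈ 𝒦, ∃ ε : Fin v → Fin n, A = face n v F ε}

/-- `C` is a maximal chain of the family `S` partially ordered by inclusion. -/
def IsMaxChainIn {α : Type*} (S : Set (Set α)) (C : Set (Set α)) : Prop :=
  C ⊆ S ∧ IsChain (· ⊆ ·) C ∧
    ∀ C' : Set (Set α), C' ⊆ S → IsChain (· ⊆ ·) C' → C ⊆ C' → C' = C

namespace PCaux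

lemma mem_face_self (n v : ℕ) (F : Set (Fin v)) (ε : Fin v → Fin n) : ε ∈ face n v F ε :=
  fun _ _ => rfl

lemma face_mono {n v : ℕ} {F G : Set (Fin v)} (h : F ⊆ G) (ε : Fin v → Fin n) :
    face n v F ε ⊆ face n v G ε :=
  fun η hη i hi => hη i (fun hF => hi (h hF))

lemma face_subset_iff {n v : ℕ} (hn : 2 ≤ n) {F G : Set (Fin v)} {ε : Fin v → Fin n} :
    face n v F ε ⊆ face n v G ε ↔ F ⊆ G := by
  constructor
  · intro h i hiF
    by_contra hiG
    haveI : Nontrivial (Fin n) := Fin.nontrivial_iff_two_le.mpr hn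
    obtain ⟨j, hj⟩ := exists_ne (ε i)
    have hmem : Function.update ε i j ∈ face n v F ε := by
      intro k hk
      have : k ≠ i := fun e => hk (e ▸ hiF)
      simp [Function.update_of_ne this]
    have := h hmem i hiG
    rw [Function.update_self] at this
    exact hj this
  · intro h
    exact face_mono h ε

lemma face_inj {n v : ℕ} (hn : 2 ≤ n) {F G : Set (Fin v)} {ε : Fin v → Fin n}
    (h : face n v F ε = face n v G ε) : F = G :=
  Set.Subset.antisymm ((face_subset_iff hn).1 h.le) ((face_subset_iff hn).1 h.ge)

lemma face_eq_of_mem {n v : ℕ} {F : Set (Fin v)} {η ε : Fin v → Fin n}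
    (h : ε ∈ face n v F η) : face n v F η = face n v F ε := by
  ext η'
  constructor
  · intro hη' i hi
    rw [hη' i hi, ← h i hi]
  · intro hη' i hi
    rw [hη' i hi, h i hi]

lemma face_empty (n v : ℕ) (ε : Fin v → Fin n) : face n v ∅ ε = {ε} := by
  ext η
  constructor
  · intro h
    have : η = ε := funext fun i => h i (Set.notMem_empty i)
    rw [Set.mem_singleton_iff]
    exact this
  · intro h
    rw [Set.mem_singleton_iff] at h
    subst h
    exact mem_face_self n v ∅ η

/-- Every element of the power complex containing `ε` is a face `F(ε)` with `F ∈ 𝒦`. -/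
lemma exists_face_of_mem {n v : ℕ} {𝒦 : Set (Set (Fin v))} {A : Set (Fin v → Fin n)}
    (hA : A ∈ powerComplex n v 𝒦) {ε : Fin v → Fin n} (hε : ε ∈ A) :
    ∃ F ∈ 𝒦, A = face n v F ε := by
  obtain ⟨F, hF, η, rfl⟩ := hA
  exact ⟨F, hF, face_eq_of_mem hε⟩

/-- A maximal chain of `𝒦` contains `∅` if `∅ ∈ 𝒦`. -/
lemma empty_mem_maxChain {v : ℕ} {𝒦 𝒞 : Set (Set (Fin v))} (hempty : ∅ ∈ 𝒦)
    (h : IsMaxChainIn 𝒦 𝒞) : (∅ : Set (Fin v)) ∈ 𝒞 := by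
  obtain ⟨hsub, hchain, hmax⟩ := h
  have : insert (∅ : Set (Fin v)) 𝒞 = 𝒞 := by
    apply hmax
    · intro A hA
      rcases hA with rfl | hA
      · exact hempty
      · exact hsub hA
    · exact hchain.insert (fun B _ _ => Or.inl (Set.empty_subset B))
    · exact Set.subset_insert _ _
  rw [← this]; exact Set.mem_insert _ _
end PCaux

open PCaux in
theorem flags_of_powerComplex (n v : ℕ) (hn : 2 ≤ n) (hv : 1 ≤ v)
    (𝒦 : Set (Set (Fin v))) (hempty : ∅ ∈ 𝒦) :
    (∀ (ε : Fin v → Fin n) (𝒞 : Set (Set (Fin v))), IsMaxChainIn 𝒦 𝒞 →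
      IsMaxChainIn (powerComplex n v 𝒦) ((fun F => face n v F ε) '' 𝒞)) ∧
    (∀ (ε ε' : Fin v → Fin n) (𝒞 𝒞' : Set (Set (Fin v))),
      IsMaxChainIn 𝒦 𝒞 → IsMaxChainIn 𝒦 𝒞' →
      (fun F => face n v F ε) '' 𝒞 = (fun F => face n v F ε') '' 𝒞' → ε = ε' ∧ 𝒞 = 𝒞') ∧
    (∀ D : Set (Set (Fin v → Fin n)), IsMaxChainIn (powerComplex n v 𝒦) D →
      ∃ (ε : Fin v → Fin n) (𝒞 : Set (Set (Fin v))), IsMaxChainIn 𝒦 𝒞 ∧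
        D = (fun F => face n v F ε) '' 𝒞) ∧
    (∀ D : Set (Set (Fin v → Fin n)), IsMaxChainIn (powerComplex n v 𝒦) D →
      ∃! ε : Fin v → Fin n, {ε} ∈ D ∧ ∀ A ∈ D, ε ∈ A) := by
  -- Part 1
  have part1 : ∀ (ε : Fin v → Fin n) (𝒞 : Set (Set (Fin v))), IsMaxChainIn 𝒦 𝒞 →
      IsMaxChainIn (powerComplex n v 𝒦) ((fun F => face n v F ε) '' 𝒞) := by
    intro ε 𝒞 h𝒞
    obtain ⟨hsub, hchain, hmax⟩ := h𝒞
    refine ⟨?_, ?_, ?_⟩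
    · rintro A ⟨F, hF, rfl⟩
      exact ⟨F, hsub hF, ε, rfl⟩
    · rintro A ⟨F, hF, rfl⟩ B ⟨G, hG, rfl⟩ hne
      have hFG : F ≠ G := fun e => hne (by rw [e])
      rcases hchain hF hG hFG with h | h
      · exact Or.inl (face_mono h ε)
      · exact Or.inr (face_mono h ε)
    · intro D' hD'sub hD'chain hsub'
      have hemp𝒞 : (∅ : Set (Fin v)) ∈ 𝒞 := empty_mem_maxChain hempty ⟨hsub, hchain, hmax⟩
      have hεD' : ({ε} : Set (Fin v → Fin n)) ∈ D' := by
        apply hsub'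
        exact ⟨∅, hemp𝒞, face_empty n v ε⟩
      -- every element of D' contains ε
      have hεmem : ∀ A ∈ D', ε ∈ A := by
        intro A hA
        by_cases hAe : A = {ε}
        · rw [hAe]; rfl
        · rcases hD'chain hA hεD' hAe with h | h
          · -- A ⊆ {ε}, but A is nonempty face
            obtain ⟨F, _, η, rfl⟩ := hD'sub hA
            have := h (mem_face_self n v F η)
            rw [Set.mem_singleton_iff] at this
            rw [← this]
            exact mem_face_self n v F η
          · exact h rfl
      -- D' = image of 𝒞' := preimage
      set 𝒞' : Set (Set (Fin v)) := {F | face n v F ε ∈ D'} with h𝒞'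
      have h𝒞'sub : 𝒞' ⊆ 𝒦 := by
        intro F hF
        obtain ⟨F', hF', hFF'⟩ := exists_face_of_mem (hD'sub hF) (mem_face_self n v F ε)
        rwa [face_inj hn hFF']
      have h𝒞'chain : IsChain (· ⊆ ·) 𝒞' := by
        intro F hF G hG hne
        have : face n v F ε ≠ face n v G ε := fun e => hne (face_inj hn e)
        rcases hD'chain hF hG this with h | h
        · exact Or.inl ((face_subset_iff hn).1 h)
        · exact Or.inr ((face_subset_iff hn).1 h)
      have h𝒞𝒞' : 𝒞 ⊆ 𝒞' := fun F hF => hsub' ⟨F, hF, rfl⟩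
      have heq : 𝒞' = 𝒞 := hmax 𝒞' h𝒞'sub h𝒞'chain h𝒞𝒞'
      apply Set.Subset.antisymm _ hsub'
      intro A hA
      obtain ⟨F, _, hAF⟩ := exists_face_of_mem (hD'sub hA) (hεmem A hA)
      have : F ∈ 𝒞' := by rw [h𝒞', Set.mem_setOf_eq, ← hAF]; exact hA
      exact ⟨F, heq ▸ this, hAF.symm⟩
  -- Part 2
  have part2 : ∀ (ε ε' : Fin v → Fin n) (𝒞 𝒞' : Set (Set (Fin v))),
      IsMaxChainIn 𝒦 𝒞 → IsMaxChainIn 𝒦 𝒞' →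
      (fun F => face n v F ε) '' 𝒞 = (fun F => face n v F ε') '' 𝒞' → ε = ε' ∧ 𝒞 = 𝒞' := by
    intro ε ε' 𝒞 𝒞' h𝒞 h𝒞' himg
    have hε : ({ε} : Set (Fin v → Fin n)) ∈ (fun F => face n v F ε') '' 𝒞' := by
      rw [← himg]
      exact ⟨∅, empty_mem_maxChain hempty h𝒞, face_empty n v ε⟩
    obtain ⟨F, _, hF⟩ := hε
    have hεε' : ε = ε' := by
      have : ε' ∈ ({ε} : Set (Fin v → Fin n)) := by rw [← hF]; exact mem_face_self n v F ε'
      exact (Set.mem_singleton_iff.1 this).symm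
    subst hεε'
    refine ⟨rfl, ?_⟩
    ext F
    constructor
    · intro hF'
      have : face n v F ε ∈ (fun F => face n v F ε) '' 𝒞' := himg ▸ ⟨F, hF', rfl⟩
      obtain ⟨G, hG, hFG⟩ := this
      rwa [← face_inj hn hFG]
    · intro hF'
      have : face n v F ε ∈ (fun F => face n v F ε) '' 𝒞 := himg ▸ ⟨F, hF', rfl⟩
      obtain ⟨G, hG, hFG⟩ := this
      rwa [← face_inj hn hFG]
  -- Part 3
  have part3 : ∀ D : Set (Set (Fin v → Fin n)), IsMaxChainIn (powerComplex n v 𝒦) D →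
      ∃ (ε : Fin v → Fin n) (𝒞 : Set (Set (Fin v))), IsMaxChainIn 𝒦 𝒞 ∧
        D = (fun F => face n v F ε) '' 𝒞 := by
    intro D hD
    obtain ⟨hDsub, hDchain, hDmax⟩ := hD
    -- D is nonempty
    have hDne : D.Nonempty := by
      by_contra hne
      rw [Set.not_nonempty_iff_eq_empty] at hne
      subst hne
      have : ({({(fun _ => ⟨0, by omega⟩ : Fin v → Fin n)} : Set (Fin v → Fin n))} :
          Set (Set (Fin v → Fin n))) = ∅ := by
        apply hDmax
        · rintro A rfl
          exact ⟨∅, hempty, _, (face_empty n v _).symm⟩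
        · exact Set.Subsingleton.isChain (Set.subsingleton_singleton)
        · exact Set.empty_subset _
      simp at this
    -- D has a least element
    have hDfin : D.Finite := Set.toFinite D
    obtain ⟨m, hmD, hmin⟩ := Set.Finite.exists_minimalFor id D hDfin hDne
    have hleast : ∀ A ∈ D, m ⊆ A := by
      intro A hA
      by_cases hAm : A = m
      · rw [hAm]
      · rcases hDchain hmD hA (fun e => hAm e.symm) with h | h
        · exact h
        · exact hmin hA h
    -- pick ε in m
    obtain ⟨F₀, _, η₀, hm⟩ := hDsub hmD
    have hε₀ : η₀ ∈ m := hm ▸ mem_face_self n v F₀ η₀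
    set ε := η₀
    have hεall : ∀ A ∈ D, ε ∈ A := fun A hA => hleast A hA hε₀
    set 𝒞 : Set (Set (Fin v)) := {F | face n v F ε ∈ D} with h𝒞
    have h𝒞sub : 𝒞 ⊆ 𝒦 := by
      intro F hF
      obtain ⟨F', hF', hFF'⟩ := exists_face_of_mem (hDsub hF) (mem_face_self n v F ε)
      rwa [face_inj hn hFF']
    have h𝒞chain : IsChain (· ⊆ ·) 𝒞 := by
      intro F hF G hG hne
      have : face n v F ε ≠ face n v G ε := fun e => hne (face_inj hn e)
      rcases hDchain hF hG this with h | h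
      · exact Or.inl ((face_subset_iff hn).1 h)
      · exact Or.inr ((face_subset_iff hn).1 h)
    have himg : D = (fun F => face n v F ε) '' 𝒞 := by
      apply Set.Subset.antisymm
      · intro A hA
        obtain ⟨F, _, hAF⟩ := exists_face_of_mem (hDsub hA) (hεall A hA)
        exact ⟨F, by rw [h𝒞, Set.mem_setOf_eq, ← hAF]; exact hA, hAF.symm⟩
      · rintro A ⟨F, hF, rfl⟩
        exact hF
    refine ⟨ε, 𝒞, ⟨h𝒞sub, h𝒞chain, ?_⟩, himg⟩
    intro 𝒞' h𝒞'sub h𝒞'chain hsub'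
    have himg' : (fun F => face n v F ε) '' 𝒞' = D := by
      apply hDmax
      · rintro A ⟨F, hF, rfl⟩
        exact ⟨F, h𝒞'sub hF, ε, rfl⟩
      · rintro A ⟨F, hF, rfl⟩ B ⟨G, hG, rfl⟩ hne
        have hFG : F ≠ G := fun e => hne (by rw [e])
        rcases h𝒞'chain hF hG hFG with h | h
        · exact Or.inl (face_mono h ε)
        · exact Or.inr (face_mono h ε)
      · rw [himg]
        exact Set.image_mono hsub'
    apply Set.Subset.antisymm _ hsub'
    intro F hF
    have : face n v F ε ∈ D := himg' ▸ ⟨F, hF, rfl⟩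
    exact this
  refine ⟨part1, part2, part3, ?_⟩
  -- Part 4
  intro D hD
  obtain ⟨ε, 𝒞, h𝒞, rfl⟩ := part3 D hD
  refine ⟨ε, ⟨⟨∅, empty_mem_maxChain hempty h𝒞, face_empty n v ε⟩, ?_⟩, ?_⟩
  · rintro A ⟨F, hF, rfl⟩
    exact mem_face_self n v F ε
  · rintro ε' ⟨hε'D, hε'all⟩
    have h1 : ({ε} : Set (Fin v → Fin n)) ∈ (fun F => face n v F ε) '' 𝒞 :=
      ⟨∅, empty_mem_maxChain hempty h𝒞, face_empty n v ε⟩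
    have := hε'all {ε} h1
    exact Set.mem_singleton_iff.1 this
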